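/- Let p be a probability distribution on ℝ^d, σ > 0, and let x̃ = x_true + ξ where x_true ~ p and ξ ~ N(0, σ² I_d) is independent of x_true. Let p_{x̃} denote the conditional law of x_true given x̃. Then for any δ ∈ (0,1) and δ' ∈ (0,1), setting r = σ·(√d + √(2·log(1/(δ·δ')))), with probability at least 1 − δ' over x̃ it holds that P_{x ∼ p_{x̃}}[ x ∈ B(x̃, r) ] ≥ 1 − δ. -/

import Mathlib

open MeasureTheory ProbabilityTheory Metric

/-- The density of the isotropic Gaussian `N(0, σ² I_d)` on `ℝ^d`. -/
noncomputable def gaussDensity (d : ℕ) (σ2 : ℝ) (x : EuclideanSpace ℝ (Fin d)) : ℝ :=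
  (2 * Real.pi * σ2) ^ (-(d : ℝ) / 2) * Real.exp (-‖x‖ ^ 2 / (2 * σ2))

/-- The isotropic Gaussian measure `N(0, σ² I_d)` on `ℝ^d`. -/
noncomputable def gaussMeasure (d : ℕ) (σ2 : ℝ) : Measure (EuclideanSpace ℝ (Fin d)) :=
  volume.withDensity fun x => ENNReal.ofReal (gaussDensity d σ2 x)

/-- Let `x̃ = x_true + ξ` with `x_true ~ p` and `ξ ~ N(0, σ² I_d)`
independent.  For `δ, δ' ∈ (0,1)` and `r = σ(√d + √(2 log(1/(δδ'))))`, with probability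
at least `1 − δ'` over `x̃`, the posterior of `x_true` given `x̃` puts mass at least
`1 − δ` on the ball `B(x̃, r)`. -/
lemma log_key {y : ℝ} (hy : 0 < y) (hy1 : y ≤ 1) : -Real.log y ≤ (1/y - y)/2 := by
  have h0 : 0 ≤ -Real.log y := neg_nonneg.mpr (Real.log_nonpos hy.le hy1)
  have h := Real.self_le_sinh_iff.mpr h0
  rw [Real.sinh_eq, neg_neg, Real.exp_neg, Real.exp_log hy] at h
  rw [one_div]
  exact h

lemma chernoff_exponent {D u s : ℝ} (hu : 0 < u) (hs : 0 < s) (hD : D = u^2) :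
    (1 - 2 * (s/(u+2*s))) ^ (-D / 2 : ℝ) *
      Real.exp (-(s/(u+2*s)) * (u + Real.sqrt 2 * s)^2) ≤ Real.exp (-(s^2)) := by
  have h1 : 0 < u + 2*s := by linarith
  have hne : u + 2*s ≠ 0 := ne_of_gt h1
  have hy : (1 : ℝ) - 2 * (s/(u+2*s)) = u/(u+2*s) := by field_simp; ring
  have hypos : 0 < u/(u+2*s) := div_pos hu h1
  have hyle : u/(u+2*s) ≤ 1 := by rw [div_le_one h1]; linarith
  have hw : (Real.sqrt 2)^2 = 2 := Real.sq_sqrt (by norm_num)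
  have hw1 : (1:ℝ) ≤ Real.sqrt 2 := by nlinarith [hw, Real.sqrt_nonneg 2]
  rw [hy, Real.rpow_def_of_pos hypos, ← Real.exp_add, Real.exp_le_exp]
  have hkey := log_key hypos hyle
  have h2 : 1 / (u/(u+2*s)) = (u+2*s)/u := by rw [one_div_div]
  rw [h2] at hkey
  have hDpos : 0 ≤ D/2 := by rw [hD]; positivity
  have h3 : Real.log (u/(u+2*s)) * (-D/2) = (D/2) * (-Real.log (u/(u+2*s))) := by ring
  rw [h3]
  have h4 : (D/2) * (-Real.log (u/(u+2*s))) ≤ (D/2) * (((u+2*s)/u - u/(u+2*s))/2) :=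
    mul_le_mul_of_nonneg_left hkey hDpos
  have hLHS : (u^2/2) * (((u+2*s)/u - u/(u+2*s))/2) + (-(s/(u+2*s)) * (u + Real.sqrt 2 * s)^2)
      = (u^2*((u+2*s)^2 - u^2) - 4*u*s*(u + Real.sqrt 2 * s)^2) / (4*u*(u+2*s)) := by
    field_simp
    ring
  have h5 : (u^2/2) * (((u+2*s)/u - u/(u+2*s))/2) + (-(s/(u+2*s)) * (u + Real.sqrt 2 * s)^2)
      ≤ -s^2 := by
    have hexp : (u + Real.sqrt 2 * s)^2 = u^2 + 2*Real.sqrt 2*u*s + 2*s^2 := by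
      have h' : (u + Real.sqrt 2 * s)^2 = u^2 + 2*Real.sqrt 2*u*s + (Real.sqrt 2)^2*s^2 := by
        ring
      rw [h', hw]
    rw [hLHS, hexp, div_le_iff₀ (by positivity)]
    nlinarith [mul_nonneg (sub_nonneg.mpr hw1) (mul_pos (mul_pos hu hu) (mul_pos hs hs)).le]
  rw [hD] at h4 ⊢
  linarith

lemma integrable_gauss (d : ℕ) {b : ℝ} (hb : 0 < b) :
    Integrable (fun x : EuclideanSpace ℝ (Fin d) => Real.exp (-b * ‖x‖^2)) := by
  have h := (GaussianFourier.integrable_cexp_neg_mul_sq_norm_add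
    (V := EuclideanSpace ℝ (Fin d)) (b := (b:ℂ)) (by simpa using hb) 0 0).norm
  refine h.congr (Filter.Eventually.of_forall fun x => ?_)
  simp [Complex.norm_exp]
  exact Or.inl (by rw [← Complex.ofReal_pow, Complex.ofReal_re])

lemma gauss_tail (d : ℕ) {σ t r : ℝ} (hσ : 0 < σ) (ht : 0 < t)
    (hr : r = σ * (Real.sqrt d + Real.sqrt (2*t))) :
    gaussMeasure d (σ^2) {x : EuclideanSpace ℝ (Fin d) | r < ‖x‖}
      ≤ ENNReal.ofReal (Real.exp (-t)) := by
  have hA : MeasurableSet {x : EuclideanSpace ℝ (Fin d) | r < ‖x‖} :=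
    measurableSet_lt measurable_const measurable_norm
  rcases Nat.eq_zero_or_pos d with hd | hd
  · subst hd
    have hr0 : 0 ≤ r := by rw [hr]; positivity
    have hempty : {x : EuclideanSpace ℝ (Fin 0) | r < ‖x‖} = ∅ := by
      ext x
      have hx : ‖x‖ = 0 := by simp [EuclideanSpace.norm_eq]
      simp [hx]
      linarith
    rw [hempty]
    simp
  · set u := Real.sqrt d with hu_def
    set s := Real.sqrt t with hs_def
    have hu : 0 < u := Real.sqrt_pos.mpr (by exact_mod_cast hd)
    have hs : 0 < s := Real.sqrt_pos.mpr ht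
    have hu2 : u^2 = d := Real.sq_sqrt (Nat.cast_nonneg d)
    have hs2 : s^2 = t := Real.sq_sqrt ht.le
    set l := s/(u+2*s) with hl_def
    have h1 : 0 < u + 2*s := by linarith
    have hl0 : 0 ≤ l := by positivity
    have h2l : 1 - 2*l = u/(u+2*s) := by rw [hl_def]; field_simp; ring
    have h2lpos : 0 < 1 - 2*l := by rw [h2l]; positivity
    have hσ2 : (0:ℝ) < σ^2 := by positivity
    have h2πσ : (0:ℝ) < 2*Real.pi*σ^2 := by positivity
    set b := (1-2*l)/(2*σ^2) with hb_def
    have hb : 0 < b := by positivity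
    have hρ : r = σ * (u + Real.sqrt 2 * s) := by
      rw [hr, Real.sqrt_mul (by norm_num) t]
    have hr0 : 0 ≤ r := by rw [hρ]; positivity
    set C := (2*Real.pi*σ^2) ^ (-(d:ℝ)/2) * Real.exp (-l*r^2/σ^2) with hC_def
    have hC0 : 0 < C := by rw [hC_def]; positivity
    have hident : ∀ x : EuclideanSpace ℝ (Fin d),
        C * Real.exp (-b*‖x‖^2) = Real.exp (l*(‖x‖^2-r^2)/σ^2) * gaussDensity d (σ^2) x := by
      intro x
      rw [hC_def, gaussDensity,
        mul_assoc ((2*Real.pi*σ^2) ^ (-(d:ℝ)/2)), ← Real.exp_add,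
        mul_comm (Real.exp (l*(‖x‖^2-r^2)/σ^2)),
        mul_assoc ((2*Real.pi*σ^2) ^ (-(d:ℝ)/2)), ← Real.exp_add]
      congr 1
      rw [hb_def]
      field_simp
      ring
    have hmaj : ∀ x : EuclideanSpace ℝ (Fin d), r < ‖x‖ →
        gaussDensity d (σ^2) x ≤ C * Real.exp (-b*‖x‖^2) := by
      intro x hx
      rw [hident x]
      have hgd0 : 0 ≤ gaussDensity d (σ^2) x := by
        rw [gaussDensity]; positivity
      have hxr : r^2 ≤ ‖x‖^2 := by nlinarith [norm_nonneg x]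
      have h1exp : (1:ℝ) ≤ Real.exp (l*(‖x‖^2-r^2)/σ^2) :=
        Real.one_le_exp (div_nonneg (mul_nonneg hl0 (by linarith)) hσ2.le)
      calc gaussDensity d (σ^2) x = 1 * gaussDensity d (σ^2) x := (one_mul _).symm
        _ ≤ Real.exp (l*(‖x‖^2-r^2)/σ^2) * gaussDensity d (σ^2) x :=
            mul_le_mul_of_nonneg_right h1exp hgd0
    have hint : Integrable (fun x : EuclideanSpace ℝ (Fin d) => C * Real.exp (-b*‖x‖^2)) :=
      (integrable_gauss d hb).const_mul C
    calc gaussMeasure d (σ^2) {x : EuclideanSpace ℝ (Fin d) | r < ‖x‖}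
        = ∫⁻ x in {x : EuclideanSpace ℝ (Fin d) | r < ‖x‖},
            ENNReal.ofReal (gaussDensity d (σ^2) x) ∂volume := withDensity_apply _ hA
      _ ≤ ∫⁻ x in {x : EuclideanSpace ℝ (Fin d) | r < ‖x‖},
            ENNReal.ofReal (C * Real.exp (-b*‖x‖^2)) ∂volume := by
          have hm : Measurable fun x : EuclideanSpace ℝ (Fin d) =>
              ENNReal.ofReal (C * Real.exp (-b*‖x‖^2)) :=
            ENNReal.measurable_ofReal.comp
              ((((measurable_norm.pow_const 2).const_mul (-b)).exp).const_mul C)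
          refine setLIntegral_mono hm fun x hx => ?_
          exact ENNReal.ofReal_le_ofReal (hmaj x hx)
      _ ≤ ∫⁻ x, ENNReal.ofReal (C * Real.exp (-b*‖x‖^2)) ∂volume :=
          setLIntegral_le_lintegral _ _
      _ = ENNReal.ofReal (∫ x : EuclideanSpace ℝ (Fin d), C * Real.exp (-b*‖x‖^2)) :=
          (ofReal_integral_eq_lintegral_ofReal hint
            (Filter.Eventually.of_forall fun x =>
              mul_nonneg hC0.le (Real.exp_nonneg _))).symm
      _ ≤ ENNReal.ofReal (Real.exp (-t)) := by
          refine ENNReal.ofReal_le_ofReal ?_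
          rw [integral_const_mul, GaussianFourier.integral_rexp_neg_mul_sq_norm hb,
            finrank_euclideanSpace_fin]
          have hπb : Real.pi/b = (2*Real.pi*σ^2)/(1-2*l) := by
            rw [hb_def]; field_simp
          have hrw : (Real.pi/b) ^ ((d:ℝ)/2) =
              (2*Real.pi*σ^2) ^ ((d:ℝ)/2) * (1-2*l) ^ (-(d:ℝ)/2) := by
            rw [hπb, Real.div_rpow h2πσ.le h2lpos.le,
              show (-(d:ℝ)/2) = -((d:ℝ)/2) from neg_div _ _,
              Real.rpow_neg h2lpos.le, div_eq_mul_inv]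
          have hexp_eq : -l*r^2/σ^2 = -l*(u + Real.sqrt 2 * s)^2 := by
            rw [hρ, mul_pow]; field_simp
          have hcancel : (2*Real.pi*σ^2) ^ (-(d:ℝ)/2) * (2*Real.pi*σ^2) ^ ((d:ℝ)/2)
              = 1 := by
            rw [← Real.rpow_add h2πσ,
              show (-(d:ℝ)/2 + (d:ℝ)/2) = 0 by ring, Real.rpow_zero]
          have hchern := chernoff_exponent (D := (d:ℝ)) hu hs hu2.symm
          calc C * (Real.pi/b) ^ ((d:ℝ)/2)
              = (1-2*l) ^ (-(d:ℝ)/2) * Real.exp (-l*(u + Real.sqrt 2 * s)^2) := by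
                rw [hC_def, hrw, hexp_eq]
                rw [show (2*Real.pi*σ^2) ^ (-(d:ℝ)/2) * Real.exp (-l*(u + Real.sqrt 2 * s)^2) *
                    ((2*Real.pi*σ^2) ^ ((d:ℝ)/2) * (1-2*l) ^ (-(d:ℝ)/2)) =
                    ((2*Real.pi*σ^2) ^ (-(d:ℝ)/2) * (2*Real.pi*σ^2) ^ ((d:ℝ)/2)) *
                    ((1-2*l) ^ (-(d:ℝ)/2) * Real.exp (-l*(u + Real.sqrt 2 * s)^2)) by ring]
                rw [hcancel, one_mul]
            _ ≤ Real.exp (-(s^2)) := by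
                have : -l*(u + Real.sqrt 2 * s)^2 = -(s/(u+2*s))*(u + Real.sqrt 2 * s)^2 := by
                  rw [hl_def]
                rw [this]
                exact hchern
            _ = Real.exp (-t) := by rw [hs2]

theorem posterior_concentration_around_gaussian_measurement (d : ℕ)
    {Ω : Type*} [MeasureSpace Ω] [IsProbabilityMeasure (ℙ : Measure Ω)]
    (xtrue ξ : Ω → EuclideanSpace ℝ (Fin d))
    (hxtrue : Measurable xtrue) (hξ : Measurable ξ)
    (σ : ℝ) (hσ : 0 < σ)
    (hξlaw : Measure.map ξ ℙ = gaussMeasure d (σ ^ 2))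
    (hindep : IndepFun xtrue ξ ℙ)
    (xt : Ω → EuclideanSpace ℝ (Fin d)) (hxt : ∀ ω, xt ω = xtrue ω + ξ ω)
    (δ δ' : ℝ) (hδ : δ ∈ Set.Ioo (0 : ℝ) 1) (hδ' : δ' ∈ Set.Ioo (0 : ℝ) 1)
    (r : ℝ) (hrdef : r = σ * (Real.sqrt d + Real.sqrt (2 * Real.log (1 / (δ * δ'))))) :
    ENNReal.ofReal (1 - δ') ≤
      ℙ {ω | ENNReal.ofReal (1 - δ) ≤
        (condDistrib xtrue xt ℙ) (xt ω) (closedBall (xt ω) r)} := by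
  obtain ⟨hδ0, hδ1⟩ := hδ
  obtain ⟨hδ'0, hδ'1⟩ := hδ'
  have hδδ'0 : 0 < δ * δ' := mul_pos hδ0 hδ'0
  have hδδ'1 : δ * δ' < 1 := by nlinarith
  have ht : 0 < Real.log (1/(δ*δ')) :=
    Real.log_pos (by rw [lt_div_iff₀ hδδ'0]; linarith)
  have hexp_t : Real.exp (-(Real.log (1/(δ*δ')))) = δ*δ' := by
    have h1 : -(Real.log (1/(δ*δ'))) = Real.log (δ*δ') := by
      rw [one_div, Real.log_inv]; ring
    rw [h1, Real.exp_log hδδ'0]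
  have hxtm : Measurable xt := by
    have h : xt = fun ω => xtrue ω + ξ ω := funext hxt
    rw [h]; exact hxtrue.add hξ
  haveI : IsProbabilityMeasure (Measure.map (fun ω => (xt ω, xtrue ω)) ℙ) :=
    Measure.isProbabilityMeasure_map (hxtm.prodMk hxtrue).aemeasurable
  -- the disintegration identity
  have hρ_eq : Measure.map (fun ω => (xt ω, xtrue ω)) ℙ
      = (Measure.map xt ℙ) ⊗ₘ condDistrib xtrue xt ℙ := by
    have h1 : (Measure.map (fun ω => (xt ω, xtrue ω)) ℙ).fst = Measure.map xt ℙ :=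
      Measure.fst_map_prodMk hxtrue
    rw [condDistrib, ← h1]
    exact (Measure.disintegrate _ _).symm
  -- the "outside ball" set in the product space
  set S : Set (EuclideanSpace ℝ (Fin d) × EuclideanSpace ℝ (Fin d)) :=
    {p | r < dist p.2 p.1} with hS_def
  have hS : MeasurableSet S :=
    measurableSet_lt measurable_const (measurable_snd.dist measurable_fst)
  have hslice : ∀ y : EuclideanSpace ℝ (Fin d),
      Prod.mk y ⁻¹' S = (closedBall y r)ᶜ := by
    intro y
    ext x
    simp [hS_def, mem_closedBall, not_le]
  -- the ball set in the product space
  set T : Set (EuclideanSpace ℝ (Fin d) × EuclideanSpace ℝ (Fin d)) :=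
    {p | dist p.2 p.1 ≤ r} with hT_def
  have hT : MeasurableSet T :=
    measurableSet_le (measurable_snd.dist measurable_fst) measurable_const
  have hsliceT : ∀ y : EuclideanSpace ℝ (Fin d),
      Prod.mk y ⁻¹' T = closedBall y r := by
    intro y
    ext x
    simp [hT_def, mem_closedBall]
  -- measurability of the posterior masses
  have hm_meas : Measurable fun ω =>
      condDistrib xtrue xt ℙ (xt ω) (closedBall (xt ω) r) := by
    have h := (Kernel.measurable_kernel_prodMk_left (κ := condDistrib xtrue xt ℙ) hT).comp hxtm
    simp only [Function.comp, hsliceT] at h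
    exact h
  have hg_meas : Measurable fun ω =>
      condDistrib xtrue xt ℙ (xt ω) ((closedBall (xt ω) r)ᶜ) := by
    have h := (Kernel.measurable_kernel_prodMk_left (κ := condDistrib xtrue xt ℙ) hS).comp hxtm
    simp only [Function.comp, hslice] at h
    exact h
  -- the expected posterior mass outside the ball is at most δδ'
  have hg_int : ∫⁻ ω, condDistrib xtrue xt ℙ (xt ω) ((closedBall (xt ω) r)ᶜ) ∂ℙ
      ≤ ENNReal.ofReal (δ*δ') := by
    have hAnorm : MeasurableSet {x : EuclideanSpace ℝ (Fin d) | r < ‖x‖} :=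
      measurableSet_lt measurable_const measurable_norm
    calc ∫⁻ ω, condDistrib xtrue xt ℙ (xt ω) ((closedBall (xt ω) r)ᶜ) ∂ℙ
        = ∫⁻ ω, condDistrib xtrue xt ℙ (xt ω) (Prod.mk (xt ω) ⁻¹' S) ∂ℙ := by
          congr 1
          funext ω
          rw [hslice]
      _ = ∫⁻ y, condDistrib xtrue xt ℙ y (Prod.mk y ⁻¹' S) ∂(Measure.map xt ℙ) :=
          (lintegral_map (Kernel.measurable_kernel_prodMk_left hS) hxtm).symm
      _ = ((Measure.map xt ℙ) ⊗ₘ condDistrib xtrue xt ℙ) S := (Measure.compProd_apply hS).symm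
      _ = Measure.map (fun ω => (xt ω, xtrue ω)) ℙ S := by rw [hρ_eq]
      _ = ℙ ((fun ω => (xt ω, xtrue ω)) ⁻¹' S) :=
          Measure.map_apply (hxtm.prodMk hxtrue) hS
      _ = ℙ (ξ ⁻¹' {x : EuclideanSpace ℝ (Fin d) | r < ‖x‖}) := by
          congr 1
          ext ω
          have : dist (xtrue ω) (xt ω) = ‖ξ ω‖ := by
            rw [dist_eq_norm, hxt ω]
            simp
          simp only [hS_def, Set.mem_preimage, Set.mem_setOf_eq, this]
      _ = Measure.map ξ ℙ {x : EuclideanSpace ℝ (Fin d) | r < ‖x‖} :=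
          (Measure.map_apply hξ hAnorm).symm
      _ ≤ ENNReal.ofReal (δ*δ') := by
          rw [hξlaw, ← hexp_t]
          exact gauss_tail d hσ ht hrdef
  -- Markov inequality
  set A : Set Ω := {ω | ENNReal.ofReal (1 - δ) ≤
      condDistrib xtrue xt ℙ (xt ω) (closedBall (xt ω) r)} with hA_def
  have hAmeas : MeasurableSet A := measurableSet_le measurable_const hm_meas
  have hone_sub : (1 : ENNReal) - ENNReal.ofReal (1-δ) = ENNReal.ofReal δ := by
    rw [← ENNReal.ofReal_one, ← ENNReal.ofReal_sub _ (by linarith : (0:ℝ) ≤ 1 - δ)]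
    norm_num
  have hsubset : Aᶜ ⊆ {ω | ENNReal.ofReal δ ≤
      condDistrib xtrue xt ℙ (xt ω) ((closedBall (xt ω) r)ᶜ)} := by
    intro ω hω
    simp only [hA_def, Set.mem_compl_iff, Set.mem_setOf_eq, not_le] at hω
    have hcompl_eq : condDistrib xtrue xt ℙ (xt ω) ((closedBall (xt ω) r)ᶜ)
        = 1 - condDistrib xtrue xt ℙ (xt ω) (closedBall (xt ω) r) := by
      rw [measure_compl measurableSet_closedBall (measure_ne_top _ _), measure_univ]
    simp only [Set.mem_setOf_eq, hcompl_eq, ← hone_sub]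
    exact tsub_le_tsub_left hω.le 1
  have hcompl_le : ℙ Aᶜ ≤ ENNReal.ofReal δ' := by
    calc ℙ Aᶜ ≤ ℙ {ω | ENNReal.ofReal δ ≤
          condDistrib xtrue xt ℙ (xt ω) ((closedBall (xt ω) r)ᶜ)} :=
          measure_mono hsubset
      _ ≤ (∫⁻ ω, condDistrib xtrue xt ℙ (xt ω) ((closedBall (xt ω) r)ᶜ) ∂ℙ)
            / ENNReal.ofReal δ :=
          meas_ge_le_lintegral_div hg_meas.aemeasurable
            (ne_of_gt (ENNReal.ofReal_pos.mpr hδ0)) ENNReal.ofReal_ne_top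
      _ ≤ ENNReal.ofReal (δ*δ') / ENNReal.ofReal δ :=
          ENNReal.div_le_div_right hg_int _
      _ = ENNReal.ofReal δ' := by
          rw [show δ*δ' = δ'*δ by ring, ENNReal.ofReal_mul hδ'0.le, mul_div_assoc,
            ENNReal.div_self (ne_of_gt (ENNReal.ofReal_pos.mpr hδ0)) ENNReal.ofReal_ne_top,
            mul_one]
  have hsum : ℙ A + ℙ Aᶜ = 1 := by
    rw [measure_add_measure_compl hAmeas, measure_univ]
  have h1δ' : ENNReal.ofReal (1 - δ') = 1 - ENNReal.ofReal δ' := by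
    rw [← ENNReal.ofReal_one, ← ENNReal.ofReal_sub _ hδ'0.le]
  rw [h1δ', tsub_le_iff_right]
  calc (1:ENNReal) = ℙ A + ℙ Aᶜ := hsum.symm
    _ ≤ ℙ A + ENNReal.ofReal δ' := add_le_add_right hcompl_le _
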